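/- Let γ ∈ (0,1) and let f be locally Lipschitz continuous on an open interval (α, β) ⊂ ℝ. Then for every u₀ ∈ (α, β) there exist T > 0 and a unique continuous solution u : [0,T) → (α, β) of the fractional ODE D_c^γ u = f(u) with u(0) = u₀; moreover, letting T_b be the maximal existence time, either T_b = ∞, or T_b < ∞ and liminf_{t→T_b⁻} u(t) = α or limsup_{t→T_b⁻} u(t) = β. -/

import Mathlib

open MeasureTheory Real Filter Set Asymptotics
open scoped ENNReal Topology

/-- `u` is a solution of the Volterra integral form of the fractional ODE
`D_c^γ u = f(u)`, `u(0) = u₀`, on the interval `[0, T)` (with `T ∈ (0,∞]`),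
taking values in the set `D`. -/
noncomputable def IsSolUpTo (γ : ℝ) (f : ℝ → ℝ) (D : Set ℝ) (u₀ : ℝ) (u : ℝ → ℝ)
    (T : ℝ≥0∞) : Prop :=
  u 0 = u₀ ∧
  ContinuousOn u {t : ℝ | 0 ≤ t ∧ ENNReal.ofReal t < T} ∧
  (∀ t : ℝ, 0 ≤ t → ENNReal.ofReal t < T → u t ∈ D) ∧
  (∀ t : ℝ, 0 ≤ t → ENNReal.ofReal t < T →
    u t = u₀ + (1 / Real.Gamma γ) * ∫ s in (0:ℝ)..t, (t - s) ^ (γ - 1) * f (u s))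

/-- The maximal existence time `T_b`: the supremum of all `T` such that a solution
exists on `[0, T)`. -/
noncomputable def maxTime (γ : ℝ) (f : ℝ → ℝ) (D : Set ℝ) (u₀ : ℝ) : ℝ≥0∞ :=
  sSup {T : ℝ≥0∞ | ∃ u : ℝ → ℝ, IsSolUpTo γ f D u₀ u T}


open intervalIntegral

section Kernel

variable {γ : ℝ}

lemma ker_ii (hγ : γ ∈ Set.Ioo (0:ℝ) 1) (t a b : ℝ) :
    IntervalIntegrable (fun s => (t - s) ^ (γ-1)) volume a b := by
  have h : IntervalIntegrable (fun x : ℝ => x ^ (γ-1)) volume (t - a) (t - b) :=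
    intervalIntegrable_rpow' (by linarith [hγ.1])
  simpa using h.comp_sub_left t

lemma ker_val (hγ : γ ∈ Set.Ioo (0:ℝ) 1) (t a b : ℝ) :
    (∫ s in a..b, (t - s) ^ (γ-1)) = ((t-a)^γ - (t-b)^γ)/γ := by
  have h := intervalIntegral.integral_comp_sub_left (a := a) (b := b)
    (fun x : ℝ => x ^ (γ-1)) t
  rw [h, integral_rpow (Or.inl (by linarith [hγ.1]))]
  rw [sub_add_cancel]

lemma ker_mul_ii (hγ : γ ∈ Set.Ioo (0:ℝ) 1) {g : ℝ → ℝ} {a b t : ℝ} (hab : a ≤ b)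
    (hg : ContinuousOn g (Set.Icc a b)) :
    IntervalIntegrable (fun s => (t - s) ^ (γ-1) * g s) volume a b := by
  apply (ker_ii hγ t a b).mul_continuousOn
  rwa [Set.uIcc_of_le hab]

lemma ker_nonneg (hγ : γ ∈ Set.Ioo (0:ℝ) 1) {t s : ℝ} (h : s ≤ t) :
    0 ≤ (t - s) ^ (γ-1) := Real.rpow_nonneg (by linarith) _

lemma ker_bound (hγ : γ ∈ Set.Ioo (0:ℝ) 1) {g : ℝ → ℝ} {M a t : ℝ} (hat : a ≤ t)
    (hg : ContinuousOn g (Set.Icc a t)) (hM : ∀ s ∈ Set.Icc a t, |g s| ≤ M) :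
    |∫ s in a..t, (t - s) ^ (γ-1) * g s| ≤ M * (t-a)^γ / γ := by
  have hint := ker_mul_ii hγ hat hg (t := t)
  have h1 : |∫ s in a..t, (t - s) ^ (γ-1) * g s| ≤ ∫ s in a..t, |(t - s) ^ (γ-1) * g s| :=
    intervalIntegral.abs_integral_le_integral_abs hat
  have h2 : (∫ s in a..t, |(t - s) ^ (γ-1) * g s|) ≤ ∫ s in a..t, (t - s) ^ (γ-1) * M := by
    apply intervalIntegral.integral_mono_on hat hint.abs
    · exact (ker_ii hγ t a t).mul_const M
    · intro s hs
      rw [abs_mul, abs_of_nonneg (ker_nonneg hγ hs.2)]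
      exact mul_le_mul_of_nonneg_left (hM s hs) (ker_nonneg hγ hs.2)
  have h3 : (∫ s in a..t, (t - s) ^ (γ-1) * M) = M * (t-a)^γ / γ := by
    rw [intervalIntegral.integral_mul_const, ker_val hγ, sub_self,
      Real.zero_rpow (ne_of_gt hγ.1)]
    ring
  linarith

end Kernel

lemma rpow_subadd (hγ : γ ∈ Set.Ioo (0:ℝ) 1) {x y : ℝ} (hx : 0 ≤ x) (hy : 0 ≤ y) :
    (x + y) ^ γ ≤ x ^ γ + y ^ γ := by
  have h := NNReal.rpow_add_le_add_rpow (x.toNNReal) (y.toNNReal) hγ.1.le hγ.2.le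
  have h2 := NNReal.coe_le_coe.mpr h
  push_cast [Real.coe_toNNReal _ hx, Real.coe_toNNReal _ hy] at h2
  exact h2

lemma rpow_sub_le (hγ : γ ∈ Set.Ioo (0:ℝ) 1) {x y : ℝ} (hy : 0 ≤ y) (hxy : y ≤ x) :
    x ^ γ - y ^ γ ≤ (x - y) ^ γ := by
  have h := rpow_subadd hγ hy (sub_nonneg.mpr hxy)
  rw [add_sub_cancel] at h
  linarith

lemma ker_diff (hγ : γ ∈ Set.Ioo (0:ℝ) 1) {g : ℝ → ℝ} {M a b t t' : ℝ}
    (hab : a ≤ b) (hbt : b ≤ t) (htt' : t ≤ t')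
    (hg : ContinuousOn g (Set.Icc a b)) (hM : ∀ s ∈ Set.Icc a b, |g s| ≤ M) :
    |(∫ s in a..b, (t' - s) ^ (γ-1) * g s) - ∫ s in a..b, (t - s) ^ (γ-1) * g s|
      ≤ M * (t'-t)^γ / γ := by
  have hM0 : 0 ≤ M := le_trans (abs_nonneg _) (hM a ⟨le_refl _, hab⟩)
  have hi1 := ker_mul_ii hγ hab hg (t := t')
  have hi2 := ker_mul_ii hγ hab hg (t := t)
  rw [← intervalIntegral.integral_sub hi1 hi2]
  have h1 : |∫ s in a..b, ((t' - s) ^ (γ-1) * g s - (t - s) ^ (γ-1) * g s)|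
      ≤ ∫ s in a..b, |(t' - s) ^ (γ-1) * g s - (t - s) ^ (γ-1) * g s| :=
    intervalIntegral.abs_integral_le_integral_abs hab
  have hae : ∀ᵐ (s:ℝ) ∂(volume : Measure ℝ), s ≠ b := by
    rw [ae_iff]
    have : {s : ℝ | ¬ s ≠ b} = {b} := by ext; simp
    rw [this]
    exact measure_singleton b
  have h2 : (∫ s in a..b, |(t' - s) ^ (γ-1) * g s - (t - s) ^ (γ-1) * g s|)
      ≤ ∫ s in a..b, ((t - s) ^ (γ-1) - (t' - s) ^ (γ-1)) * M := by
    apply intervalIntegral.integral_mono_ae_restrict hab (hi1.sub hi2).abs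
      (((ker_ii hγ t a b).sub (ker_ii hγ t' a b)).mul_const M)
    rw [Filter.EventuallyLE, ae_restrict_iff' measurableSet_Icc]
    filter_upwards [hae] with s hsb hsmem
    have hslt : s < b := lt_of_le_of_ne hsmem.2 hsb
    have h0 : 0 < t - s := by linarith
    have hker : (t' - s) ^ (γ-1) ≤ (t - s) ^ (γ-1) :=
      Real.rpow_le_rpow_of_nonpos h0 (by linarith) (by linarith [hγ.2])
    have : (t' - s) ^ (γ-1) * g s - (t - s) ^ (γ-1) * g s
        = ((t' - s) ^ (γ-1) - (t - s) ^ (γ-1)) * g s := by ring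
    rw [this, abs_mul, abs_of_nonpos (by linarith : (t' - s) ^ (γ-1) - (t - s) ^ (γ-1) ≤ 0),
      neg_sub]
    exact mul_le_mul_of_nonneg_left (hM s hsmem) (by linarith)
  have h3 : (∫ s in a..b, ((t - s) ^ (γ-1) - (t' - s) ^ (γ-1)) * M)
      = ((((t-a)^γ - (t-b)^γ) - ((t'-a)^γ - (t'-b)^γ))/γ) * M := by
    rw [intervalIntegral.integral_mul_const,
      intervalIntegral.integral_sub (ker_ii hγ t a b) (ker_ii hγ t' a b),
      ker_val hγ, ker_val hγ, div_sub_div_same]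
  have h4 : (t-a)^γ - (t-b)^γ - ((t'-a)^γ - (t'-b)^γ) ≤ (t'-t)^γ := by
    have e1 : (t-a)^γ ≤ (t'-a)^γ :=
      Real.rpow_le_rpow (by linarith) (by linarith) hγ.1.le
    have e2 : (t'-b)^γ - (t-b)^γ ≤ (t'-t)^γ := by
      have := rpow_sub_le hγ (x := t'-b) (y := t-b) (by linarith) (by linarith)
      have heq : t' - b - (t - b) = t' - t := by ring
      rwa [heq] at this
    linarith
  have hγ0 : (0:ℝ) < γ := hγ.1
  have h5 : ((((t-a)^γ - (t-b)^γ) - ((t'-a)^γ - (t'-b)^γ))/γ) * M ≤ M * (t'-t)^γ / γ := by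
    rw [div_mul_eq_mul_div, mul_comm _ M]
    gcongr
  linarith

lemma ker_time (hγ : γ ∈ Set.Ioo (0:ℝ) 1) {g : ℝ → ℝ} {M a t t' : ℝ}
    (hat : a ≤ t) (htt' : t ≤ t')
    (hg : ContinuousOn g (Set.Icc a t')) (hM : ∀ s ∈ Set.Icc a t', |g s| ≤ M) :
    |(∫ s in a..t', (t' - s) ^ (γ-1) * g s) - ∫ s in a..t, (t - s) ^ (γ-1) * g s|
      ≤ 2 * M * (t'-t)^γ / γ := by
  have hsub : Set.Icc a t ⊆ Set.Icc a t' := Set.Icc_subset_Icc_right htt'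
  have hsub2 : Set.Icc t t' ⊆ Set.Icc a t' := Set.Icc_subset_Icc_left hat
  have hsplit : (∫ s in a..t', (t' - s) ^ (γ-1) * g s)
      = (∫ s in a..t, (t' - s) ^ (γ-1) * g s) + ∫ s in t..t', (t' - s) ^ (γ-1) * g s := by
    rw [intervalIntegral.integral_add_adjacent_intervals
      (ker_mul_ii hγ hat (hg.mono hsub)) (ker_mul_ii hγ htt' (hg.mono hsub2))]
  have b1 := ker_diff hγ hat (le_refl t) htt' (hg.mono hsub) (fun s hs => hM s (hsub hs))
  have b2 := ker_bound hγ htt' (hg.mono hsub2) (fun s hs => hM s (hsub2 hs))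
  rw [hsplit]
  have : (∫ s in a..t, (t' - s) ^ (γ-1) * g s) + (∫ s in t..t', (t' - s) ^ (γ-1) * g s)
      - ∫ s in a..t, (t - s) ^ (γ-1) * g s
      = ((∫ s in a..t, (t' - s) ^ (γ-1) * g s) - ∫ s in a..t, (t - s) ^ (γ-1) * g s)
        + ∫ s in t..t', (t' - s) ^ (γ-1) * g s := by ring
  rw [this]
  calc |_| ≤ |(∫ s in a..t, (t' - s) ^ (γ-1) * g s) - ∫ s in a..t, (t - s) ^ (γ-1) * g s|
      + |∫ s in t..t', (t' - s) ^ (γ-1) * g s| := abs_add_le _ _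
    _ ≤ M * (t'-t)^γ / γ + M * (t'-t)^γ / γ := add_le_add b1 b2
    _ = 2 * M * (t'-t)^γ / γ := by ring

lemma contOn_of_holder {ψ : ℝ → ℝ} {s : Set ℝ} {C : ℝ} (hγ : γ ∈ Set.Ioo (0:ℝ) 1)
    (h : ∀ x ∈ s, ∀ y ∈ s, x ≤ y → |ψ y - ψ x| ≤ C * (y-x)^γ) :
    ContinuousOn ψ s := by
  intro x hx
  have hdist : ∀ y ∈ s, dist (ψ y) (ψ x) ≤ C * |y - x| ^ γ := by
    intro y hy
    rcases le_total x y with hxy | hxy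
    · rw [Real.dist_eq, (by rw [abs_of_nonneg (by linarith : (0:ℝ) ≤ y - x)] : |y - x| = y - x)]
      exact h x hx y hy hxy
    · rw [Real.dist_eq, abs_sub_comm,
        (by rw [abs_sub_comm]; exact abs_of_nonneg (by linarith) : |y - x| = x - y)]
      exact h y hy x hx hxy
  have htend : Filter.Tendsto (fun y => C * |y - x| ^ γ) (𝓝[s] x) (𝓝 0) := by
    have h0 : Filter.Tendsto (fun y : ℝ => |y - x|) (𝓝[s] x) (𝓝 0) := by
      apply Filter.Tendsto.mono_left _ nhdsWithin_le_nhds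
      have h00 : Filter.Tendsto (fun y : ℝ => y - x) (𝓝 x) (𝓝 (x - x)) :=
        (continuous_id.sub continuous_const).tendsto x
      rw [sub_self] at h00
      simpa using h00.abs
    have h1 : ContinuousAt (fun r : ℝ => C * r ^ γ) 0 :=
      (Real.continuousAt_rpow_const 0 γ (Or.inr hγ.1.le)).const_mul C
    have h2 := h1.tendsto.comp h0
    simpa [Function.comp_def, Real.zero_rpow (ne_of_gt hγ.1)] using h2
  rw [ContinuousWithinAt, tendsto_iff_dist_tendsto_zero]
  apply squeeze_zero' (Filter.Eventually.of_forall (fun y => dist_nonneg))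
    (Filter.eventually_iff_exists_mem.mpr ⟨s, self_mem_nhdsWithin, hdist⟩) htend

lemma exists_small_rpow (hγ : γ ∈ Set.Ioo (0:ℝ) 1) {c' b : ℝ} (hc : 0 < c') (hb : 0 < b) :
    ∃ ε : ℝ, 0 < ε ∧ ε ≤ b ∧ ε ^ γ < c' := by
  have hcont : Filter.Tendsto (fun r : ℝ => r ^ γ) (𝓝 0) (𝓝 ((0:ℝ) ^ γ)) :=
    (Real.continuousAt_rpow_const 0 γ (Or.inr hγ.1.le))
  rw [Real.zero_rpow (ne_of_gt hγ.1)] at hcont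
  have hev : ∀ᶠ r in 𝓝 (0:ℝ), r ^ γ < c' := by
    apply hcont.eventually_lt tendsto_const_nhds
    simpa using hc
  rcases Metric.eventually_nhds_iff.mp hev with ⟨δ, hδ, hδ'⟩
  refine ⟨min (δ/2) b, by positivity, min_le_right _ _, ?_⟩
  apply hδ'
  rw [Real.dist_eq, sub_zero, abs_of_pos (by positivity)]
  calc min (δ/2) b ≤ δ/2 := min_le_left _ _
    _ < δ := by linarith

section Lip

variable {α β : ℝ} {f : ℝ → ℝ}
variable (hf : ∀ x ∈ Set.Ioo α β, ∃ K : NNReal, ∃ s ∈ 𝓝[Set.Ioo α β] x, LipschitzOnWith K f s)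
include hf

lemma f_contOn : ContinuousOn f (Set.Ioo α β) := by
  intro x hx
  obtain ⟨K, s, hs, hl⟩ := hf x hx
  obtain ⟨O, hO, hxO, hOs⟩ := mem_nhdsWithin.mp hs
  have hxs : x ∈ s := hOs ⟨hxO, hx⟩
  have h1 : ContinuousWithinAt f s x := hl.continuousOn x hxs
  exact h1.mono_of_mem_nhdsWithin hs

lemma f_localdata : ∀ x ∈ Set.Ioo α β, ∃ K : NNReal, ∃ δ : ℝ, 0 < δ ∧
    Set.Icc (x-δ) (x+δ) ⊆ Set.Ioo α β ∧ LipschitzOnWith K f (Set.Icc (x-δ) (x+δ)) := by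
  intro x hx
  obtain ⟨K, s, hs, hl⟩ := hf x hx
  obtain ⟨O, hO, hxO, hOs⟩ := mem_nhdsWithin.mp hs
  have hOI : IsOpen (O ∩ Set.Ioo α β) := hO.inter isOpen_Ioo
  rcases Metric.isOpen_iff.mp hOI x ⟨hxO, hx⟩ with ⟨r, hr, hball⟩
  have hsub : Set.Icc (x - r/2) (x + r/2) ⊆ Metric.ball x r := by
    intro y hy
    rw [Metric.mem_ball, Real.dist_eq, abs_lt]
    constructor <;> [linarith [hy.1]; linarith [hy.2]]
  refine ⟨K, r/2, by positivity, ?_, ?_⟩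
  · exact fun y hy => (hball (hsub hy)).2
  · exact hl.mono (fun y hy => hOs (hball (hsub hy)))

end Lip

lemma picard_fix (hγ : γ ∈ Set.Ioo (0:ℝ) 1) {c t₀ ε M₀ M₁ K' : ℝ}
    (ht₀ : 0 ≤ t₀) (hε : 0 < ε)
    {g F : ℝ → ℝ} (hg : ContinuousOn g (Set.Icc 0 t₀))
    (hgM : ∀ s ∈ Set.Icc 0 t₀, |g s| ≤ M₀)
    (hF : Continuous F) (hFM : ∀ y, |F y| ≤ M₁)
    (hFlip : ∀ y z, |F y - F z| ≤ K' * |y - z|)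
    (hcontr : |c| * K' * ε ^ γ / γ ≤ 1/2) (u₀ : ℝ) :
    ∃ w : ℝ → ℝ, Continuous w ∧ ∀ t ∈ Set.Icc t₀ (t₀+ε),
      w t = u₀ + c * ((∫ s in (0:ℝ)..t₀, (t-s)^(γ-1) * g s)
        + ∫ s in t₀..t, (t-s)^(γ-1) * F (w s)) := by
  have hγ0 : (0:ℝ) < γ := hγ.1
  have hM₁0 : 0 ≤ M₁ := le_trans (abs_nonneg _) (hFM 0)
  have hK'0 : 0 ≤ K' := by
    have := hFlip 1 0
    simp only [sub_zero, abs_one, mul_one] at this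
    exact le_trans (abs_nonneg _) this
  set E := BoundedContinuousFunction ℝ ℝ with hE
  set ψ : E → ℝ → ℝ := fun v τ => u₀ + c * ((∫ s in (0:ℝ)..t₀, (τ-s)^(γ-1) * g s)
    + ∫ s in t₀..τ, (τ-s)^(γ-1) * F (v s)) with hψ
  set clamp : ℝ → ℝ := fun t => max t₀ (min t (t₀+ε)) with hclampdef
  have hclamp_mem : ∀ t, clamp t ∈ Set.Icc t₀ (t₀+ε) := by
    intro t
    constructor
    · exact le_max_left _ _
    · exact max_le (by linarith) (min_le_right _ _)
  have hclamp_id : ∀ t ∈ Set.Icc t₀ (t₀+ε), clamp t = t := by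
    intro t ht
    rw [hclampdef]
    simp only
    rw [min_eq_left ht.2, max_eq_right ht.1]
  have hclamp_cont : Continuous clamp := continuous_const.max (continuous_id.min continuous_const)
  have hψ_cont : ∀ v : E, ContinuousOn (ψ v) (Set.Icc t₀ (t₀+ε)) := by
    intro v
    apply contOn_of_holder (C := |c| * (M₀ + 2*M₁) / γ) hγ
    intro τ hτ τ' hτ' hττ'
    have hH := ker_diff hγ (M := M₀) ht₀ hτ.1 hττ' hg hgM
    have hG := ker_time hγ (M := M₁) (a := t₀) hτ.1 hττ'
      ((hF.comp v.continuous).continuousOn) (fun s _ => hFM (v s))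
    have hdecomp : ψ v τ' - ψ v τ
        = c * (((∫ s in (0:ℝ)..t₀, (τ'-s)^(γ-1) * g s) - ∫ s in (0:ℝ)..t₀, (τ-s)^(γ-1) * g s)
          + ((∫ s in t₀..τ', (τ'-s)^(γ-1) * F (v s)) - ∫ s in t₀..τ, (τ-s)^(γ-1) * F (v s))) := by
      rw [hψ]; ring
    rw [hdecomp, abs_mul]
    calc |c| * |_| ≤ |c| * (M₀ * (τ'-τ)^γ / γ + 2 * M₁ * (τ'-τ)^γ / γ) := by
          apply mul_le_mul_of_nonneg_left _ (abs_nonneg c)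
          exact (abs_add_le _ _).trans (add_le_add hH hG)
      _ = |c| * (M₀ + 2*M₁) / γ * (τ'-τ)^γ := by ring
  have hΦfun_cont : ∀ v : E, Continuous (fun t => ψ v (clamp t)) :=
    fun v => (hψ_cont v).comp_continuous hclamp_cont hclamp_mem
  have hbd : ∀ v : E, ∃ C, ∀ x y : ℝ, dist (ψ v (clamp x)) (ψ v (clamp y)) ≤ C := by
    intro v
    obtain ⟨B, hB⟩ := isCompact_Icc.exists_bound_of_continuousOn (hψ_cont v)
    refine ⟨B + B, fun x y => ?_⟩
    calc dist (ψ v (clamp x)) (ψ v (clamp y)) ≤ ‖ψ v (clamp x)‖ + ‖ψ v (clamp y)‖ :=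
          dist_le_norm_add_norm _ _
      _ ≤ B + B := add_le_add (hB _ (hclamp_mem x)) (hB _ (hclamp_mem y))
  set Φ : E → E := fun v => BoundedContinuousFunction.mkOfBound
    ⟨fun t => ψ v (clamp t), hΦfun_cont v⟩ (Classical.choose (hbd v))
    (Classical.choose_spec (hbd v)) with hΦ
  have hΦcoe : ∀ (v : E) (t : ℝ), Φ v t = ψ v (clamp t) := fun v t => rfl
  have hlip : LipschitzWith (⟨1/2, by norm_num⟩ : NNReal) Φ := by
    apply LipschitzWith.of_dist_le_mul
    intro v w
    have hd0 : 0 ≤ (1/2 : ℝ) * dist v w := by positivity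
    rw [BoundedContinuousFunction.dist_le (by push_cast; exact hd0)]
    intro t
    set τ := clamp t with hτdef
    have hτ := hclamp_mem t
    rw [Real.dist_eq, hΦcoe, hΦcoe]
    have hsub : ψ v τ - ψ w τ
        = c * ((∫ s in t₀..τ, (τ-s)^(γ-1) * F (v s)) - ∫ s in t₀..τ, (τ-s)^(γ-1) * F (w s)) := by
      rw [hψ]; ring
    have hgd : ContinuousOn (fun s => F (v s) - F (w s)) (Set.Icc t₀ τ) :=
      ((hF.comp v.continuous).sub (hF.comp w.continuous)).continuousOn
    have hgdM : ∀ s ∈ Set.Icc t₀ τ, |F (v s) - F (w s)| ≤ K' * dist v w := by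
      intro s _
      calc |F (v s) - F (w s)| ≤ K' * |v s - w s| := hFlip _ _
        _ ≤ K' * dist v w := by
            apply mul_le_mul_of_nonneg_left _ hK'0
            rw [← Real.dist_eq]
            exact BoundedContinuousFunction.dist_coe_le_dist s
    have hii1 : IntervalIntegrable (fun s => (τ-s)^(γ-1) * F (v s)) volume t₀ τ :=
      ker_mul_ii hγ hτ.1 (hF.comp v.continuous).continuousOn
    have hii2 : IntervalIntegrable (fun s => (τ-s)^(γ-1) * F (w s)) volume t₀ τ :=
      ker_mul_ii hγ hτ.1 (hF.comp w.continuous).continuousOn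
    have hker := ker_bound hγ hτ.1 hgd hgdM
    have heqint : (∫ s in t₀..τ, (τ-s)^(γ-1) * (F (v s) - F (w s)))
        = (∫ s in t₀..τ, (τ-s)^(γ-1) * F (v s)) - ∫ s in t₀..τ, (τ-s)^(γ-1) * F (w s) := by
      rw [← intervalIntegral.integral_sub hii1 hii2]
      apply intervalIntegral.integral_congr
      intro s _
      ring
    rw [heqint] at hker
    have hτε : (τ - t₀)^γ ≤ ε^γ :=
      Real.rpow_le_rpow (by linarith [hτ.1]) (by linarith [hτ.2]) hγ0.le
    calc |ψ v τ - ψ w τ| = |c| * |(∫ s in t₀..τ, (τ-s)^(γ-1) * F (v s))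
            - ∫ s in t₀..τ, (τ-s)^(γ-1) * F (w s)| := by rw [hsub, abs_mul]
      _ ≤ |c| * (K' * dist v w * (τ-t₀)^γ / γ) :=
          mul_le_mul_of_nonneg_left hker (abs_nonneg c)
      _ ≤ (1/2 : ℝ) * dist v w := by
          have h1 : |c| * (K' * dist v w * (τ-t₀)^γ / γ)
              = (|c| * K' * (τ-t₀)^γ / γ) * dist v w := by ring
          rw [h1]
          apply mul_le_mul_of_nonneg_right _ dist_nonneg
          calc |c| * K' * (τ-t₀)^γ / γ ≤ |c| * K' * ε^γ / γ := by
                gcongr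
            _ ≤ 1/2 := hcontr
      _ = (⟨1/2, by norm_num⟩ : NNReal) * dist v w := by push_cast; ring
  have hcontracting : ContractingWith (⟨1/2, by norm_num⟩ : NNReal) Φ :=
    ⟨NNReal.coe_lt_coe.mp (by show (1/2:ℝ) < 1; norm_num), hlip⟩
  have : Nonempty E := ⟨0⟩
  set w := ContractingWith.fixedPoint Φ hcontracting with hw
  have hfix : Φ w = w := ContractingWith.fixedPoint_isFixedPt hcontracting
  refine ⟨w, w.continuous, fun t ht => ?_⟩
  have h2 : (Φ w) t = w t := by rw [hfix]
  rw [hΦcoe, hclamp_id t ht] at h2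
  simp only [hψ] at h2
  exact h2.symm

section Main

variable {α β u₀ : ℝ} {f : ℝ → ℝ}

lemma ext_sol (hγ : γ ∈ Set.Ioo (0:ℝ) 1)
    (hf : ∀ x ∈ Set.Ioo α β, ∃ K : NNReal, ∃ s ∈ 𝓝[Set.Ioo α β] x, LipschitzOnWith K f s)
    {t₀ : ℝ} (ht₀ : 0 ≤ t₀) {u : ℝ → ℝ}
    (hc : ContinuousOn u (Set.Icc 0 t₀))
    (hmem : ∀ t ∈ Set.Icc 0 t₀, u t ∈ Set.Ioo α β)
    (heq : ∀ t ∈ Set.Icc 0 t₀,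
      u t = u₀ + (1/Real.Gamma γ) * ∫ s in (0:ℝ)..t, (t - s)^(γ-1) * f (u s)) :
    ∃ ε : ℝ, 0 < ε ∧ ∃ v : ℝ → ℝ,
      (∀ t ∈ Set.Icc 0 t₀, v t = u t) ∧
      ContinuousOn v (Set.Icc 0 (t₀+ε)) ∧
      (∀ t ∈ Set.Icc 0 (t₀+ε), v t ∈ Set.Ioo α β) ∧
      (∀ t ∈ Set.Icc 0 (t₀+ε),
        v t = u₀ + (1/Real.Gamma γ) * ∫ s in (0:ℝ)..t, (t - s)^(γ-1) * f (v s)) := by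
  have hγ0 : (0:ℝ) < γ := hγ.1
  set c : ℝ := 1/Real.Gamma γ with hcdef
  set x₀ : ℝ := u t₀ with hx₀def
  have hx₀ : x₀ ∈ Set.Ioo α β := hmem t₀ ⟨ht₀, le_refl _⟩
  obtain ⟨K, δ, hδ, hJsub, hlip⟩ := f_localdata hf x₀ hx₀
  have hfc : ContinuousOn f (Set.Ioo α β) := f_contOn hf
  have hx₀J : x₀ ∈ Set.Icc (x₀-δ) (x₀+δ) := ⟨by linarith, by linarith⟩
  set proj : ℝ → ℝ := fun y => max (x₀-δ) (min y (x₀+δ)) with hprojdef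
  have hproj_mem : ∀ y, proj y ∈ Set.Icc (x₀-δ) (x₀+δ) := by
    intro y
    exact ⟨le_max_left _ _, max_le (by linarith) (min_le_right _ _)⟩
  have hproj_id : ∀ y ∈ Set.Icc (x₀-δ) (x₀+δ), proj y = y := by
    intro y hy
    rw [hprojdef]
    simp only
    rw [min_eq_left hy.2, max_eq_right hy.1]
  have hproj_lip : ∀ y z, |proj y - proj z| ≤ |y - z| := by
    intro y z
    calc |proj y - proj z| = |max (min y (x₀+δ)) (x₀-δ) - max (min z (x₀+δ)) (x₀-δ)| := by
          rw [hprojdef]; simp only; rw [max_comm (x₀-δ), max_comm (x₀-δ)]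
      _ ≤ |min y (x₀+δ) - min z (x₀+δ)| := abs_max_sub_max_le_abs _ _ _
      _ ≤ max |y - z| |(x₀+δ) - (x₀+δ)| := abs_min_sub_min_le_max _ _ _ _
      _ = |y - z| := by rw [sub_self, abs_zero]; exact max_eq_left (abs_nonneg _)
  have hproj_cont : Continuous proj := continuous_const.max (continuous_id.min continuous_const)
  set F : ℝ → ℝ := fun y => f (proj y) with hFdef
  have hFcont : Continuous F :=
    hfc.comp_continuous hproj_cont (fun y => hJsub (hproj_mem y))
  set M₁ : ℝ := |f x₀| + K*δ with hM₁def
  have hFM : ∀ y, |F y| ≤ M₁ := by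
    intro y
    have hd : |F y - f x₀| ≤ K * |proj y - x₀| := by
      have := hlip.dist_le_mul (proj y) (hproj_mem y) x₀ hx₀J
      rwa [Real.dist_eq, Real.dist_eq] at this
    have hpy : |proj y - x₀| ≤ δ := by
      have := hproj_mem y
      rw [abs_le]
      exact ⟨by linarith [this.1], by linarith [this.2]⟩
    calc |F y| ≤ |F y - f x₀| + |f x₀| := by
          have := abs_sub_abs_le_abs_sub (F y) (f x₀); linarith [abs_add_le (F y - f x₀) (f x₀),
            abs_sub_le (F y) (f x₀) 0]
      _ ≤ K * δ + |f x₀| := add_le_add (hd.trans (mul_le_mul_of_nonneg_left hpy K.2)) (le_refl _)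
      _ = M₁ := by rw [hM₁def]; ring
  have hM₁0 : 0 ≤ M₁ := le_trans (abs_nonneg _) (hFM 0)
  have hFlip : ∀ y z, |F y - F z| ≤ (K:ℝ) * |y - z| := by
    intro y z
    have := hlip.dist_le_mul (proj y) (hproj_mem y) (proj z) (hproj_mem z)
    rw [Real.dist_eq, Real.dist_eq] at this
    exact this.trans (mul_le_mul_of_nonneg_left (hproj_lip y z) K.2)
  have hg : ContinuousOn (fun s => f (u s)) (Set.Icc 0 t₀) :=
    hfc.comp hc (fun t ht => hmem t ht)
  obtain ⟨M₀, hM₀⟩ := isCompact_Icc.exists_bound_of_continuousOn hg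
  have hgM : ∀ s ∈ Set.Icc 0 t₀, |f (u s)| ≤ M₀ := by
    intro s hs
    have := hM₀ s hs
    rwa [Real.norm_eq_abs] at this
  have hM₀0 : 0 ≤ M₀ := le_trans (abs_nonneg _) (hgM 0 ⟨le_refl _, ht₀⟩)
  -- choose ε
  set A : ℝ := |c| * K with hA
  set B : ℝ := |c| * (M₀ + M₁) with hB
  have hA0 : 0 ≤ A := mul_nonneg (abs_nonneg _) K.2
  have hB0 : 0 ≤ B := mul_nonneg (abs_nonneg _) (by linarith)
  obtain ⟨ε, hε0, hε1, hεγ⟩ := exists_small_rpow hγ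
    (c' := min (γ/(2*(A+1))) (γ*δ/(B+1))) (b := 1)
    (lt_min (by positivity) (by positivity)) one_pos
  have hεγ0 : 0 ≤ ε ^ γ := Real.rpow_nonneg hε0.le _
  have hcontr : |c| * K * ε ^ γ / γ ≤ 1/2 := by
    rw [div_le_iff₀ hγ0]
    have h1 : ε ^ γ ≤ γ/(2*(A+1)) := (hεγ.trans_le (min_le_left _ _)).le
    calc A * ε ^ γ ≤ A * (γ/(2*(A+1))) := mul_le_mul_of_nonneg_left h1 hA0
      _ ≤ 1/2 * γ := by
          rw [mul_div_assoc', div_le_iff₀ (by positivity : (0:ℝ) < 2*(A+1))]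
          nlinarith
  have hbd2 : B * ε ^ γ / γ ≤ δ := by
    rw [div_le_iff₀ hγ0]
    have h1 : ε ^ γ ≤ γ*δ/(B+1) := (hεγ.trans_le (min_le_right _ _)).le
    calc B * ε ^ γ ≤ B * (γ*δ/(B+1)) := mul_le_mul_of_nonneg_left h1 hB0
      _ ≤ δ * γ := by
          rw [mul_div_assoc', div_le_iff₀ (by positivity : (0:ℝ) < B+1)]
          nlinarith [mul_nonneg (mul_nonneg hγ0.le hδ.le) hB0]
  obtain ⟨w, hwcont, hweq⟩ := picard_fix hγ (c := c) ht₀ hε0 hg hgM hFcont hFM hFlip hcontr u₀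
  have heqt₀ := heq t₀ ⟨ht₀, le_refl _⟩
  have hw_t₀ : w t₀ = u t₀ := by
    have := hweq t₀ ⟨le_refl _, by linarith⟩
    rw [intervalIntegral.integral_same, add_zero] at this
    rw [this, heqt₀]
  have hFw_cont : ContinuousOn (fun s => F (w s)) (Set.Icc t₀ (t₀+ε)) :=
    (hFcont.comp hwcont).continuousOn
  have hwδ : ∀ t ∈ Set.Icc t₀ (t₀+ε), |w t - x₀| ≤ δ := by
    intro t ht
    have hH := ker_diff hγ (M := M₀) (a := 0) (b := t₀) (t := t₀) (t' := t)
      ht₀ (le_refl _) ht.1 hg hgM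
    have hG := ker_bound hγ (M := M₁) (a := t₀) (t := t) ht.1
      ((hFcont.comp hwcont).continuousOn) (fun s _ => hFM (w s))
    have hval : w t - x₀ = c * (((∫ s in (0:ℝ)..t₀, (t-s)^(γ-1) * f (u s))
        - ∫ s in (0:ℝ)..t₀, (t₀-s)^(γ-1) * f (u s))
        + ∫ s in t₀..t, (t-s)^(γ-1) * F (w s)) := by
      rw [hweq t ht, hx₀def, heqt₀]; ring
    have htε : (t - t₀)^γ ≤ ε^γ :=
      Real.rpow_le_rpow (by linarith [ht.1]) (by linarith [ht.2]) hγ0.le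
    calc |w t - x₀| ≤ |c| * (M₀ * (t-t₀)^γ / γ + M₁ * (t-t₀)^γ / γ) := by
          rw [hval, abs_mul]
          exact mul_le_mul_of_nonneg_left ((abs_add_le _ _).trans (add_le_add hH hG)) (abs_nonneg _)
      _ = |c| * (M₀ + M₁) * (t-t₀)^γ / γ := by ring
      _ ≤ B * ε^γ / γ := by rw [hB]; gcongr
      _ ≤ δ := hbd2
  have hwJ : ∀ t ∈ Set.Icc t₀ (t₀+ε), w t ∈ Set.Icc (x₀-δ) (x₀+δ) := by
    intro t ht
    have := abs_le.mp (hwδ t ht)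
    exact ⟨by linarith [this.1], by linarith [this.2]⟩
  have hFw : ∀ t ∈ Set.Icc t₀ (t₀+ε), F (w t) = f (w t) := by
    intro t ht
    rw [hFdef]
    simp only
    rw [hproj_id _ (hwJ t ht)]
  set v : ℝ → ℝ := fun t => if t ≤ t₀ then u t else w t with hvdef
  have hvu : ∀ t ∈ Set.Icc 0 t₀, v t = u t := fun t ht => if_pos ht.2
  have hvw : ∀ t ∈ Set.Icc t₀ (t₀+ε), v t = w t := by
    intro t ht
    by_cases hle : t ≤ t₀
    · have htt₀ : t = t₀ := le_antisymm hle ht.1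
      rw [hvdef]; simp only [if_pos hle, htt₀, hw_t₀]
      rw [if_pos (le_refl t₀)]
    · exact if_neg hle
  have hvcont_pieces1 : ContinuousOn v (Set.Icc 0 t₀) := hc.congr hvu
  have hvcont_pieces2 : ContinuousOn v (Set.Icc t₀ (t₀+ε)) :=
    hwcont.continuousOn.congr hvw
  have hvcont : ContinuousOn v (Set.Icc 0 (t₀+ε)) := by
    intro x hx
    have hsub : Set.Icc 0 (t₀+ε) ⊆ Set.Icc 0 t₀ ∪ Set.Icc t₀ (t₀+ε) := by
      intro y hy
      by_cases h : y ≤ t₀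
      · exact Or.inl ⟨hy.1, h⟩
      · exact Or.inr ⟨le_of_not_ge h, hy.2⟩
    apply ContinuousWithinAt.mono _ hsub
    apply ContinuousWithinAt.union
    · by_cases hxm : x ∈ Set.Icc 0 t₀
      · exact hvcont_pieces1 x hxm
      · apply continuousWithinAt_of_notMem_closure
        rwa [isClosed_Icc.closure_eq]
    · by_cases hxm : x ∈ Set.Icc t₀ (t₀+ε)
      · exact hvcont_pieces2 x hxm
      · apply continuousWithinAt_of_notMem_closure
        rwa [isClosed_Icc.closure_eq]
  have hvmem : ∀ t ∈ Set.Icc 0 (t₀+ε), v t ∈ Set.Ioo α β := by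
    intro t ht
    by_cases hle : t ≤ t₀
    · rw [hvu t ⟨ht.1, hle⟩]; exact hmem t ⟨ht.1, hle⟩
    · have htt : t ∈ Set.Icc t₀ (t₀+ε) := ⟨le_of_not_ge hle, ht.2⟩
      rw [hvw t htt]
      exact hJsub (hwJ t htt)
  refine ⟨ε, hε0, v, hvu, hvcont, hvmem, ?_⟩
  intro t ht
  by_cases hle : t ≤ t₀
  · have htm : t ∈ Set.Icc 0 t₀ := ⟨ht.1, hle⟩
    have hint : (∫ s in (0:ℝ)..t, (t-s)^(γ-1) * f (v s))
        = ∫ s in (0:ℝ)..t, (t-s)^(γ-1) * f (u s) := by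
      apply intervalIntegral.integral_congr
      intro s hs
      rw [Set.uIcc_of_le ht.1] at hs
      show (t-s)^(γ-1) * f (v s) = (t-s)^(γ-1) * f (u s)
      rw [hvu s ⟨hs.1, hs.2.trans hle⟩]
    rw [hvu t htm, hint, ← heq t htm]
  · have htt : t ∈ Set.Icc t₀ (t₀+ε) := ⟨le_of_not_ge hle, ht.2⟩
    have hfv1 : ContinuousOn (fun s => f (v s)) (Set.Icc 0 t₀) :=
      hfc.comp hvcont_pieces1 (fun s hs => by rw [hvu s hs]; exact hmem s hs)
    have hfv2 : ContinuousOn (fun s => f (v s)) (Set.Icc t₀ t) := by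
      apply hfc.comp (hvcont_pieces2.mono (Set.Icc_subset_Icc_right ht.2))
      intro s hs
      have hsm : s ∈ Set.Icc t₀ (t₀+ε) := ⟨hs.1, hs.2.trans ht.2⟩
      rw [hvw s hsm]
      exact hJsub (hwJ s hsm)
    have hsplit : (∫ s in (0:ℝ)..t, (t-s)^(γ-1) * f (v s))
        = (∫ s in (0:ℝ)..t₀, (t-s)^(γ-1) * f (v s))
          + ∫ s in t₀..t, (t-s)^(γ-1) * f (v s) :=
      (intervalIntegral.integral_add_adjacent_intervals
        (ker_mul_ii hγ ht₀ hfv1) (ker_mul_ii hγ htt.1 hfv2)).symm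
    have hint1 : (∫ s in (0:ℝ)..t₀, (t-s)^(γ-1) * f (v s))
        = ∫ s in (0:ℝ)..t₀, (t-s)^(γ-1) * f (u s) := by
      apply intervalIntegral.integral_congr
      intro s hs
      rw [Set.uIcc_of_le ht₀] at hs
      show (t-s)^(γ-1) * f (v s) = (t-s)^(γ-1) * f (u s)
      rw [hvu s hs]
    have hint2 : (∫ s in t₀..t, (t-s)^(γ-1) * f (v s))
        = ∫ s in t₀..t, (t-s)^(γ-1) * F (w s) := by
      apply intervalIntegral.integral_congr
      intro s hs
      rw [Set.uIcc_of_le htt.1] at hs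
      have hsm : s ∈ Set.Icc t₀ (t₀+ε) := ⟨hs.1, hs.2.trans ht.2⟩
      show (t-s)^(γ-1) * f (v s) = (t-s)^(γ-1) * F (w s)
      rw [hvw s hsm, hFw s hsm]
    rw [hvw t htt, hweq t htt, hsplit, hint1, hint2]
end Main

section Uniq

variable {α β u₀ : ℝ} {f : ℝ → ℝ}

lemma sol_unique (hγ : γ ∈ Set.Ioo (0:ℝ) 1)
    (hf : ∀ x ∈ Set.Ioo α β, ∃ K : NNReal, ∃ s ∈ 𝓝[Set.Ioo α β] x, LipschitzOnWith K f s)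
    {T₁ T₂ : ℝ≥0∞} {u₁ u₂ : ℝ → ℝ}
    (h₁ : IsSolUpTo γ f (Set.Ioo α β) u₀ u₁ T₁)
    (h₂ : IsSolUpTo γ f (Set.Ioo α β) u₀ u₂ T₂)
    {τ : ℝ} (hτ0 : 0 ≤ τ) (hτ1 : ENNReal.ofReal τ < T₁) (hτ2 : ENNReal.ofReal τ < T₂) :
    u₁ τ = u₂ τ := by
  have hγ0 : (0:ℝ) < γ := hγ.1
  set c : ℝ := 1/Real.Gamma γ with hcdef
  obtain ⟨h₁0, h₁c, h₁m, h₁e⟩ := h₁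
  obtain ⟨h₂0, h₂c, h₂m, h₂e⟩ := h₂
  have hd₁ : ∀ s : ℝ, s ≤ τ → ENNReal.ofReal s < T₁ :=
    fun s hsτ => lt_of_le_of_lt (ENNReal.ofReal_le_ofReal hsτ) hτ1
  have hd₂ : ∀ s : ℝ, s ≤ τ → ENNReal.ofReal s < T₂ :=
    fun s hsτ => lt_of_le_of_lt (ENNReal.ofReal_le_ofReal hsτ) hτ2
  have hsubD₁ : Set.Icc 0 τ ⊆ {t : ℝ | 0 ≤ t ∧ ENNReal.ofReal t < T₁} :=
    fun s hs => ⟨hs.1, hd₁ s hs.2⟩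
  have hsubD₂ : Set.Icc 0 τ ⊆ {t : ℝ | 0 ≤ t ∧ ENNReal.ofReal t < T₂} :=
    fun s hs => ⟨hs.1, hd₂ s hs.2⟩
  have hfc : ContinuousOn f (Set.Ioo α β) := f_contOn hf
  set A := {x : ℝ | x ∈ Set.Icc 0 τ ∧ ∀ s ∈ Set.Icc 0 x, u₁ s = u₂ s} with hAdef
  have h0A : 0 ∈ A := by
    refine ⟨⟨le_refl _, hτ0⟩, fun s hs => ?_⟩
    have : s = 0 := le_antisymm hs.2 hs.1
    rw [this, h₁0, h₂0]
  have hbdd : BddAbove A := ⟨τ, fun x hx => hx.1.2⟩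
  have hne : A.Nonempty := ⟨0, h0A⟩
  set t₀ := sSup A with ht₀def
  have ht₀mem : t₀ ∈ Set.Icc 0 τ :=
    ⟨le_csSup hbdd h0A, csSup_le hne (fun x hx => hx.1.2)⟩
  have hlt : ∀ s : ℝ, 0 ≤ s → s < t₀ → u₁ s = u₂ s := by
    intro s h0 hst
    obtain ⟨x, hxA, hsx⟩ := exists_lt_of_lt_csSup hne hst
    exact hxA.2 s ⟨h0, hsx.le⟩
  have heqt₀ : u₁ t₀ = u₂ t₀ := by
    rcases eq_or_lt_of_le ht₀mem.1 with h00 | h0pos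
    · rw [← h00, h₁0, h₂0]
    · have hmemI : Set.Ioo 0 t₀ ∈ 𝓝[<] t₀ := Ioo_mem_nhdsLT_of_mem ⟨h0pos, le_refl _⟩
      have hle : 𝓝[<] t₀ ≤ 𝓝[Set.Ioo 0 t₀] t₀ := nhdsWithin_le_of_mem hmemI
      have hsub1 : Set.Ioo 0 t₀ ⊆ {t : ℝ | 0 ≤ t ∧ ENNReal.ofReal t < T₁} :=
        fun s hs => hsubD₁ ⟨hs.1.le, hs.2.le.trans ht₀mem.2⟩
      have hsub2 : Set.Ioo 0 t₀ ⊆ {t : ℝ | 0 ≤ t ∧ ENNReal.ofReal t < T₂} :=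
        fun s hs => hsubD₂ ⟨hs.1.le, hs.2.le.trans ht₀mem.2⟩
      have ht₀D₁ : t₀ ∈ {t : ℝ | 0 ≤ t ∧ ENNReal.ofReal t < T₁} := hsubD₁ ht₀mem
      have ht₀D₂ : t₀ ∈ {t : ℝ | 0 ≤ t ∧ ENNReal.ofReal t < T₂} := hsubD₂ ht₀mem
      have hT1 : Filter.Tendsto u₁ (𝓝[<] t₀) (𝓝 (u₁ t₀)) :=
        (((h₁c t₀ ht₀D₁).mono hsub1)).tendsto.mono_left hle
      have hT2 : Filter.Tendsto u₂ (𝓝[<] t₀) (𝓝 (u₂ t₀)) :=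
        (((h₂c t₀ ht₀D₂).mono hsub2)).tendsto.mono_left hle
      have hev : u₁ =ᶠ[𝓝[<] t₀] u₂ :=
        Filter.eventually_of_mem hmemI (fun s hs => hlt s hs.1.le hs.2)
      exact tendsto_nhds_unique_of_eventuallyEq hT1 hT2 hev
  have hAll : ∀ s ∈ Set.Icc 0 t₀, u₁ s = u₂ s := by
    intro s hs
    rcases lt_or_eq_of_le hs.2 with h | h
    · exact hlt s hs.1 h
    · rw [h]; exact heqt₀
  have ht₀τ : t₀ = τ := by
    by_contra hne'
    have hlt₀τ : t₀ < τ := lt_of_le_of_ne ht₀mem.2 hne'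
    obtain ⟨x₀, hx₀def⟩ : ∃ x₀ : ℝ, x₀ = u₁ t₀ := ⟨_, rfl⟩
    have hx₀ : x₀ ∈ Set.Ioo α β := by
      rw [hx₀def]; exact h₁m t₀ ht₀mem.1 (hd₁ t₀ ht₀mem.2)
    obtain ⟨K, δ, hδ, hJsub, hlip⟩ := f_localdata hf x₀ hx₀
    -- find ε₁ so both solutions stay δ-close to x₀ on [t₀, t₀+ε₁]
    have hcw₁ : Filter.Tendsto u₁ (𝓝[Set.Icc 0 τ] t₀) (𝓝 x₀) := by
      rw [hx₀def]
      exact ((h₁c t₀ (hsubD₁ ht₀mem)).mono hsubD₁).tendsto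
    have hcw₂ : Filter.Tendsto u₂ (𝓝[Set.Icc 0 τ] t₀) (𝓝 x₀) := by
      rw [hx₀def, heqt₀]
      exact ((h₂c t₀ (hsubD₂ ht₀mem)).mono hsubD₂).tendsto
    have hev₁ : ∀ᶠ s in 𝓝[Set.Icc 0 τ] t₀, dist (u₁ s) x₀ < δ :=
      Metric.tendsto_nhds.mp hcw₁ δ hδ
    have hev₂ : ∀ᶠ s in 𝓝[Set.Icc 0 τ] t₀, dist (u₂ s) x₀ < δ :=
      Metric.tendsto_nhds.mp hcw₂ δ hδ
    obtain ⟨O, hOopen, ht₀O, hOsub⟩ := mem_nhdsWithin.mp (hev₁.and hev₂)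
    obtain ⟨r, hr, hball⟩ := Metric.isOpen_iff.mp hOopen t₀ ht₀O
    obtain ⟨ε₁, hε₁def⟩ : ∃ e : ℝ, e = min (r/2) (τ - t₀) := ⟨_, rfl⟩
    have hε₁r : ε₁ ≤ r/2 := by rw [hε₁def]; exact min_le_left _ _
    have hε₁τ : ε₁ ≤ τ - t₀ := by rw [hε₁def]; exact min_le_right _ _
    have hε₁0 : 0 < ε₁ := by rw [hε₁def]; exact lt_min (by positivity) (by linarith)
    have hgood : ∀ s ∈ Set.Icc t₀ (t₀+ε₁),
        u₁ s ∈ Set.Icc (x₀-δ) (x₀+δ) ∧ u₂ s ∈ Set.Icc (x₀-δ) (x₀+δ) ∧ s ∈ Set.Icc 0 τ := by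
      intro s hs
      have hsτ : s ∈ Set.Icc 0 τ := ⟨ht₀mem.1.trans hs.1, by linarith [hs.2]⟩
      have hsO : s ∈ O := by
        apply hball
        rw [Metric.mem_ball, Real.dist_eq, abs_lt]
        constructor
        · linarith [hs.1]
        · linarith [hs.2]
      obtain ⟨hg1, hg2⟩ := hOsub ⟨hsO, hsτ⟩
      rw [Real.dist_eq] at hg1 hg2
      have hg1' := abs_le.mp hg1.le
      have hg2' := abs_le.mp hg2.le
      exact ⟨⟨by linarith [hg1'.1], by linarith [hg1'.2]⟩,
        ⟨by linarith [hg2'.1], by linarith [hg2'.2]⟩, hsτ⟩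
    set Acon : ℝ := |c| * K with hAcon
    have hA0 : 0 ≤ Acon := mul_nonneg (abs_nonneg _) K.2
    obtain ⟨ε, hε0, hεε₁, hεγ⟩ := exists_small_rpow hγ
      (c' := γ/(2*(Acon+1))) (b := ε₁) (by positivity) hε₁0
    have hcontr : Acon * ε ^ γ / γ ≤ 1/2 := by
      rw [div_le_iff₀ hγ0]
      calc Acon * ε ^ γ ≤ Acon * (γ/(2*(Acon+1))) := mul_le_mul_of_nonneg_left hεγ.le hA0
        _ ≤ 1/2 * γ := by
            rw [mul_div_assoc', div_le_iff₀ (by positivity : (0:ℝ) < 2*(Acon+1))]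
            nlinarith
    set I := Set.Icc t₀ (t₀+ε) with hIdef
    have hIsub : I ⊆ Set.Icc t₀ (t₀+ε₁) := Set.Icc_subset_Icc_right (by linarith)
    have hIτ : I ⊆ Set.Icc 0 τ := fun s hs => (hgood s (hIsub hs)).2.2
    set w : ℝ → ℝ := fun s => |u₁ s - u₂ s| with hwdef
    have hwcont : ContinuousOn w I :=
      (((h₁c.mono (fun s hs => hsubD₁ (hIτ hs)))).sub
        ((h₂c.mono (fun s hs => hsubD₂ (hIτ hs))))).abs
    have hIne : I.Nonempty := ⟨t₀, ⟨le_refl _, by linarith⟩⟩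
    obtain ⟨s', hs'I, hs'max⟩ := isCompact_Icc.exists_isMaxOn hIne hwcont
    have hs'max' : ∀ x ∈ I, w x ≤ w s' := hs'max
    have hws'0 : 0 ≤ w s' := abs_nonneg _
    have hkey : ∀ t ∈ I, w t ≤ (Acon * ε ^ γ / γ) * w s' := by
      intro t ht
      have ht0 : 0 ≤ t := ht₀mem.1.trans ht.1
      have htτ : t ≤ τ := (hIτ ht).2
      have hfu₁ : ContinuousOn (fun s => f (u₁ s)) (Set.Icc 0 t) := by
        apply hfc.comp (h₁c.mono (fun s hs => hsubD₁ ⟨hs.1, hs.2.trans htτ⟩))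
        intro s hs
        exact h₁m s hs.1 (hd₁ s (hs.2.trans htτ))
      have hfu₂ : ContinuousOn (fun s => f (u₂ s)) (Set.Icc 0 t) := by
        apply hfc.comp (h₂c.mono (fun s hs => hsubD₂ ⟨hs.1, hs.2.trans htτ⟩))
        intro s hs
        exact h₂m s hs.1 (hd₂ s (hs.2.trans htτ))
      have hdiff : u₁ t - u₂ t
          = c * ∫ s in (0:ℝ)..t, (t-s)^(γ-1) * (f (u₁ s) - f (u₂ s)) := by
        rw [h₁e t ht0 (hd₁ t htτ), h₂e t ht0 (hd₂ t htτ)]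
        have heqint : (∫ s in (0:ℝ)..t, (t-s)^(γ-1) * (f (u₁ s) - f (u₂ s)))
            = (∫ s in (0:ℝ)..t, (t-s)^(γ-1) * f (u₁ s))
              - ∫ s in (0:ℝ)..t, (t-s)^(γ-1) * f (u₂ s) := by
          rw [← intervalIntegral.integral_sub (ker_mul_ii hγ ht0 hfu₁) (ker_mul_ii hγ ht0 hfu₂)]
          apply intervalIntegral.integral_congr
          intro s _
          show (t-s)^(γ-1) * (f (u₁ s) - f (u₂ s))
            = (t-s)^(γ-1) * f (u₁ s) - (t-s)^(γ-1) * f (u₂ s)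
          ring
        rw [heqint]
        ring
      have hsplit : (∫ s in (0:ℝ)..t, (t-s)^(γ-1) * (f (u₁ s) - f (u₂ s)))
          = (∫ s in (0:ℝ)..t₀, (t-s)^(γ-1) * (f (u₁ s) - f (u₂ s)))
            + ∫ s in t₀..t, (t-s)^(γ-1) * (f (u₁ s) - f (u₂ s)) := by
        symm
        apply intervalIntegral.integral_add_adjacent_intervals
        · exact ker_mul_ii hγ ht₀mem.1
            ((hfu₁.mono (Set.Icc_subset_Icc_right ht.1)).sub
             (hfu₂.mono (Set.Icc_subset_Icc_right ht.1)))
        · exact ker_mul_ii hγ ht.1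
            ((hfu₁.mono (Set.Icc_subset_Icc_left ht₀mem.1)).sub
             (hfu₂.mono (Set.Icc_subset_Icc_left ht₀mem.1)))
      have hzero : (∫ s in (0:ℝ)..t₀, (t-s)^(γ-1) * (f (u₁ s) - f (u₂ s))) = 0 := by
        have hcongr : (∫ s in (0:ℝ)..t₀, (t-s)^(γ-1) * (f (u₁ s) - f (u₂ s)))
            = ∫ _ in (0:ℝ)..t₀, (0:ℝ) := by
          apply intervalIntegral.integral_congr
          intro s hs
          rw [Set.uIcc_of_le ht₀mem.1] at hs
          show (t-s)^(γ-1) * (f (u₁ s) - f (u₂ s)) = 0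
          rw [hAll s hs, sub_self, mul_zero]
        rw [hcongr, intervalIntegral.integral_zero]
      have htail : |∫ s in t₀..t, (t-s)^(γ-1) * (f (u₁ s) - f (u₂ s))|
          ≤ ((K:ℝ) * w s') * (t - t₀)^γ / γ := by
        apply ker_bound hγ ht.1
        · exact (hfu₁.mono (Set.Icc_subset_Icc_left ht₀mem.1)).sub
            (hfu₂.mono (Set.Icc_subset_Icc_left ht₀mem.1))
        · intro s hs
          have hsI : s ∈ I := ⟨hs.1, hs.2.trans ht.2⟩
          obtain ⟨hu₁J, hu₂J, _⟩ := hgood s (hIsub hsI)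
          have hlipd := hlip.dist_le_mul (u₁ s) hu₁J (u₂ s) hu₂J
          rw [Real.dist_eq, Real.dist_eq] at hlipd
          calc |f (u₁ s) - f (u₂ s)| ≤ K * |u₁ s - u₂ s| := hlipd
            _ ≤ K * w s' := mul_le_mul_of_nonneg_left (hs'max' s hsI) K.2
      have htε : (t - t₀)^γ ≤ ε^γ :=
        Real.rpow_le_rpow (by linarith [ht.1]) (by linarith [ht.2]) hγ0.le
      calc w t = |c| * |∫ s in t₀..t, (t-s)^(γ-1) * (f (u₁ s) - f (u₂ s))| := by
            rw [hwdef]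
            show |u₁ t - u₂ t| = _
            rw [hdiff, hsplit, hzero, zero_add, abs_mul]
        _ ≤ |c| * (((K:ℝ) * w s') * (t - t₀)^γ / γ) :=
            mul_le_mul_of_nonneg_left htail (abs_nonneg _)
        _ = (Acon * (t - t₀)^γ / γ) * w s' := by rw [hAcon]; ring
        _ ≤ (Acon * ε ^ γ / γ) * w s' := by gcongr
    have hws'zero : w s' = 0 := by
      have := hkey s' hs'I
      have h2 : (Acon * ε ^ γ / γ) ≤ 1/2 := hcontr
      nlinarith
    have hminA : min (t₀+ε) τ ∈ A := by
      have hmin0 : (0:ℝ) ≤ min (t₀+ε) τ := le_min (by linarith [ht₀mem.1]) hτ0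
      refine ⟨⟨hmin0, min_le_right _ _⟩, ?_⟩
      intro s hs
      by_cases hst₀ : s ≤ t₀
      · exact hAll s ⟨hs.1, hst₀⟩
      · have hsI : s ∈ I := ⟨le_of_not_ge hst₀, le_trans hs.2 (min_le_left _ _)⟩
        have := hs'max' s hsI
        rw [hws'zero] at this
        have habs : |u₁ s - u₂ s| = 0 := le_antisymm this (abs_nonneg _)
        exact sub_eq_zero.mp (abs_eq_zero.mp habs)
    have hcontra := le_csSup hbdd hminA
    rw [← ht₀def] at hcontra
    have : t₀ < min (t₀+ε) τ := lt_min (by linarith) hlt₀τ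
    linarith
  exact hAll τ ⟨hτ0, by rw [ht₀τ]⟩

end Uniq

section Conv

variable {α β u₀ : ℝ} {f : ℝ → ℝ}

lemma maxTime_def : maxTime γ f (Set.Ioo α β) u₀
    = sSup {T : ℝ≥0∞ | ∃ u : ℝ → ℝ, IsSolUpTo γ f (Set.Ioo α β) u₀ u T} := rfl

lemma isSol_of_closed (hγ : γ ∈ Set.Ioo (0:ℝ) 1) {u : ℝ → ℝ} {b : ℝ} (hb : 0 < b)
    (hc : ContinuousOn u (Set.Icc 0 b))
    (hmem : ∀ t ∈ Set.Icc 0 b, u t ∈ Set.Ioo α β)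
    (heq : ∀ t ∈ Set.Icc 0 b,
      u t = u₀ + (1/Real.Gamma γ) * ∫ s in (0:ℝ)..t, (t - s)^(γ-1) * f (u s)) :
    IsSolUpTo γ f (Set.Ioo α β) u₀ u (ENNReal.ofReal b) := by
  have hkey : ∀ t : ℝ, 0 ≤ t → ENNReal.ofReal t < ENNReal.ofReal b → t ∈ Set.Icc 0 b := by
    intro t ht hlt
    exact ⟨ht, ((ENNReal.ofReal_lt_ofReal_iff hb).mp hlt).le⟩
  have hsub : {t : ℝ | 0 ≤ t ∧ ENNReal.ofReal t < ENNReal.ofReal b} ⊆ Set.Icc 0 b :=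
    fun t ht => hkey t ht.1 ht.2
  have h0 : u 0 = u₀ := by
    have := heq 0 ⟨le_refl _, hb.le⟩
    rwa [intervalIntegral.integral_same, mul_zero, add_zero] at this
  exact ⟨h0, hc.mono hsub, fun t ht hlt => hmem t (hkey t ht hlt),
    fun t ht hlt => heq t (hkey t ht hlt)⟩

lemma exists_local (hγ : γ ∈ Set.Ioo (0:ℝ) 1)
    (hf : ∀ x ∈ Set.Ioo α β, ∃ K : NNReal, ∃ s ∈ 𝓝[Set.Ioo α β] x, LipschitzOnWith K f s)
    (hu₀ : u₀ ∈ Set.Ioo α β) :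
    ∃ T : ℝ≥0∞, 0 < T ∧ ∃ u : ℝ → ℝ, IsSolUpTo γ f (Set.Ioo α β) u₀ u T := by
  have h00 : ∀ t ∈ Set.Icc (0:ℝ) 0, (fun _ : ℝ => u₀) t
      = u₀ + (1/Real.Gamma γ) * ∫ s in (0:ℝ)..t, (t - s)^(γ-1) * f ((fun _ : ℝ => u₀) s) := by
    intro t ht
    have : t = 0 := le_antisymm ht.2 ht.1
    rw [this, intervalIntegral.integral_same, mul_zero, add_zero]
  obtain ⟨ε, hε0, v, _, hvcont, hvmem, hveq⟩ := ext_sol hγ hf (le_refl (0:ℝ))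
    continuousOn_const (fun t ht => by simpa using hu₀) h00
  rw [zero_add] at hvcont hvmem hveq
  exact ⟨ENNReal.ofReal ε, ENNReal.ofReal_pos.mpr hε0, v,
    isSol_of_closed hγ hε0 hvcont hvmem hveq⟩

lemma closed_of_isSol (hγ : γ ∈ Set.Ioo (0:ℝ) 1) {u : ℝ → ℝ} {T : ℝ≥0∞} {b : ℝ}
    (hsol : IsSolUpTo γ f (Set.Ioo α β) u₀ u T) (hb : 0 ≤ b) (hbT : ENNReal.ofReal b < T) :
    ContinuousOn u (Set.Icc 0 b) ∧ (∀ t ∈ Set.Icc 0 b, u t ∈ Set.Ioo α β) ∧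
    (∀ t ∈ Set.Icc 0 b,
      u t = u₀ + (1/Real.Gamma γ) * ∫ s in (0:ℝ)..t, (t - s)^(γ-1) * f (u s)) := by
  have hsub : Set.Icc 0 b ⊆ {t : ℝ | 0 ≤ t ∧ ENNReal.ofReal t < T} :=
    fun t ht => ⟨ht.1, lt_of_le_of_lt (ENNReal.ofReal_le_ofReal ht.2) hbT⟩
  exact ⟨hsol.2.1.mono hsub, fun t ht => hsol.2.2.1 t ht.1 (hsub ht).2,
    fun t ht => hsol.2.2.2 t ht.1 (hsub ht).2⟩

end Conv

section Glue

variable {α β u₀ : ℝ} {f : ℝ → ℝ}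

lemma sol_max (hγ : γ ∈ Set.Ioo (0:ℝ) 1)
    (hf : ∀ x ∈ Set.Ioo α β, ∃ K : NNReal, ∃ s ∈ 𝓝[Set.Ioo α β] x, LipschitzOnWith K f s) :
    ∃ u : ℝ → ℝ, IsSolUpTo γ f (Set.Ioo α β) u₀ u (maxTime γ f (Set.Ioo α β) u₀) ∧
      (∀ t : ℝ, ∀ (h0 : 0 ≤ t) (hlt : ENNReal.ofReal t < maxTime γ f (Set.Ioo α β) u₀),
        ∀ (T : ℝ≥0∞) (w : ℝ → ℝ), IsSolUpTo γ f (Set.Ioo α β) u₀ w T →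
          ENNReal.ofReal t < T → u t = w t) := by
  set Tb := maxTime γ f (Set.Ioo α β) u₀ with hTbdef
  have hQ : ∀ t : ℝ, 0 ≤ t → ENNReal.ofReal t < Tb →
      ∃ p : (ℝ → ℝ) × ℝ≥0∞, IsSolUpTo γ f (Set.Ioo α β) u₀ p.1 p.2
        ∧ ENNReal.ofReal t < p.2 := by
    intro t _ hlt
    rw [hTbdef, maxTime_def, lt_sSup_iff] at hlt
    obtain ⟨T, ⟨w, hw⟩, hT⟩ := hlt
    exact ⟨(w, T), hw, hT⟩
  classical
  set glue : ℝ → ℝ := fun t =>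
    if h : 0 ≤ t ∧ ENNReal.ofReal t < Tb then (Classical.choose (hQ t h.1 h.2)).1 t else u₀
    with hgluedef
  have hglue_eq : ∀ t : ℝ, ∀ (h0 : 0 ≤ t) (hlt : ENNReal.ofReal t < Tb),
      ∀ (T : ℝ≥0∞) (w : ℝ → ℝ), IsSolUpTo γ f (Set.Ioo α β) u₀ w T →
        ENNReal.ofReal t < T → glue t = w t := by
    intro t h0 hlt T w hw hT
    have hcond : 0 ≤ t ∧ ENNReal.ofReal t < Tb := ⟨h0, hlt⟩
    rw [hgluedef]
    show (if h : 0 ≤ t ∧ ENNReal.ofReal t < Tb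
      then (Classical.choose (hQ t h.1 h.2)).1 t else u₀) = w t
    rw [dif_pos hcond]
    obtain ⟨hsol', hT'⟩ := Classical.choose_spec (hQ t hcond.1 hcond.2)
    exact sol_unique hγ hf hsol' hw h0 hT' hT
  have hD : ∀ t : ℝ, 0 ≤ t → ENNReal.ofReal t < Tb →
      ∀ s ∈ Set.Icc 0 t, 0 ≤ s ∧ ENNReal.ofReal s < Tb :=
    fun t _ hlt s hs => ⟨hs.1, lt_of_le_of_lt (ENNReal.ofReal_le_ofReal hs.2) hlt⟩
  refine ⟨glue, ⟨?_, ?_, ?_, ?_⟩, hglue_eq⟩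
  · -- glue 0 = u₀
    rw [hgluedef]
    show (if h : 0 ≤ (0:ℝ) ∧ ENNReal.ofReal 0 < Tb
      then (Classical.choose (hQ 0 h.1 h.2)).1 0 else u₀) = u₀
    by_cases h : 0 ≤ (0:ℝ) ∧ ENNReal.ofReal 0 < Tb
    · rw [dif_pos h]
      exact (Classical.choose_spec (hQ 0 h.1 h.2)).1.1
    · rw [dif_neg h]
  · -- continuity
    intro t₁ ht₁
    obtain ⟨⟨w, T⟩, hsolw, hTlt⟩ := hQ t₁ ht₁.1 ht₁.2
    simp only at hsolw hTlt
    have hTTb : T ≤ Tb := by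
      rw [hTbdef, maxTime_def]
      exact le_sSup ⟨w, hsolw⟩
    have hUopen : IsOpen {t : ℝ | ENNReal.ofReal t < T} :=
      isOpen_Iio.preimage ENNReal.continuous_ofReal
    have hUmem : {t : ℝ | ENNReal.ofReal t < T} ∈ 𝓝 t₁ := hUopen.mem_nhds hTlt
    have hmemW : ({t : ℝ | 0 ≤ t ∧ ENNReal.ofReal t < Tb}
        ∩ {t : ℝ | ENNReal.ofReal t < T}) ∈
        𝓝[{t : ℝ | 0 ≤ t ∧ ENNReal.ofReal t < Tb}] t₁ :=
      Filter.inter_mem self_mem_nhdsWithin (mem_nhdsWithin_of_mem_nhds hUmem)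
    have hsubT : ({t : ℝ | 0 ≤ t ∧ ENNReal.ofReal t < Tb}
        ∩ {t : ℝ | ENNReal.ofReal t < T}) ⊆ {t : ℝ | 0 ≤ t ∧ ENNReal.ofReal t < T} :=
      fun s hs => ⟨hs.1.1, hs.2⟩
    have hcw : ContinuousWithinAt w {t : ℝ | 0 ≤ t ∧ ENNReal.ofReal t < Tb} t₁ :=
      (hsolw.2.1 t₁ ⟨ht₁.1, hTlt⟩).mono_of_mem_nhdsWithin
        (Filter.mem_of_superset hmemW hsubT)
    apply hcw.congr_of_eventuallyEq
    · exact Filter.eventuallyEq_of_mem hmemW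
        (fun s hs => hglue_eq s hs.1.1 hs.1.2 T w hsolw hs.2)
    · exact hglue_eq t₁ ht₁.1 ht₁.2 T w hsolw hTlt
  · -- membership
    intro t h0 hlt
    obtain ⟨⟨w, T⟩, hsolw, hTlt⟩ := hQ t h0 hlt
    simp only at hsolw hTlt
    rw [hglue_eq t h0 hlt T w hsolw hTlt]
    exact hsolw.2.2.1 t h0 hTlt
  · -- equation
    intro t h0 hlt
    obtain ⟨⟨w, T⟩, hsolw, hTlt⟩ := hQ t h0 hlt
    simp only at hsolw hTlt
    rw [hglue_eq t h0 hlt T w hsolw hTlt]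
    have hint : (∫ s in (0:ℝ)..t, (t-s)^(γ-1) * f (glue s))
        = ∫ s in (0:ℝ)..t, (t-s)^(γ-1) * f (w s) := by
      apply intervalIntegral.integral_congr
      intro s hs
      rw [Set.uIcc_of_le h0] at hs
      have hs' := hD t h0 hlt s hs
      show (t-s)^(γ-1) * f (glue s) = (t-s)^(γ-1) * f (w s)
      rw [hglue_eq s hs'.1 hs'.2 T w hsolw
        (lt_of_le_of_lt (ENNReal.ofReal_le_ofReal hs.2) hTlt)]
    rw [hint]
    exact hsolw.2.2.2 t h0 hTlt

end Glue

section Dich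

variable {α β u₀ : ℝ} {f : ℝ → ℝ}

lemma dichotomy (hγ : γ ∈ Set.Ioo (0:ℝ) 1)
    (hf : ∀ x ∈ Set.Ioo α β, ∃ K : NNReal, ∃ s ∈ 𝓝[Set.Ioo α β] x, LipschitzOnWith K f s)
    {T : ℝ≥0∞} (hT : T = maxTime γ f (Set.Ioo α β) u₀) (hTpos : 0 < T) (hTtop : T ≠ ⊤)
    {u : ℝ → ℝ} (hsol : IsSolUpTo γ f (Set.Ioo α β) u₀ u T) :
    Filter.liminf u (𝓝[<] T.toReal) = α ∨ Filter.limsup u (𝓝[<] T.toReal) = β := by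
  by_contra hcon
  push_neg at hcon
  obtain ⟨hlinf, hlsup⟩ := hcon
  obtain ⟨τb, hτbdef⟩ : ∃ x : ℝ, x = T.toReal := ⟨_, rfl⟩
  rw [← hτbdef] at hlinf hlsup
  have hτb0 : 0 < τb := by rw [hτbdef]; exact ENNReal.toReal_pos hTpos.ne' hTtop
  have hof : ENNReal.ofReal τb = T := by rw [hτbdef]; exact ENNReal.ofReal_toReal hTtop
  have hdom : ∀ t : ℝ, t < τb → ENNReal.ofReal t < T := by
    intro t h
    rw [← hof]
    exact (ENNReal.ofReal_lt_ofReal_iff hτb0).mpr h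
  obtain ⟨h0u, hcont, hmem, heq⟩ := hsol
  have hfc : ContinuousOn f (Set.Ioo α β) := f_contOn hf
  have hγ0 : (0:ℝ) < γ := hγ.1
  have hl_mem : Set.Ioo (τb/2) τb ∈ 𝓝[<] τb :=
    Ioo_mem_nhdsLT_of_mem ⟨by linarith, le_refl _⟩
  have hev_mem : ∀ᶠ t in 𝓝[<] τb, 0 < t ∧ t < τb :=
    Filter.eventually_of_mem hl_mem (fun t ht => ⟨by linarith [ht.1], ht.2⟩)
  have hev_Ioo : ∀ᶠ t in 𝓝[<] τb, u t ∈ Set.Ioo α β :=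
    hev_mem.mono (fun t ht => hmem t ht.1.le (hdom t ht.2))
  have hbddle : Filter.IsBoundedUnder (· ≤ ·) (𝓝[<] τb) u :=
    ⟨β, Filter.eventually_map.mpr (hev_Ioo.mono fun t ht => ht.2.le)⟩
  have hbddge : Filter.IsBoundedUnder (· ≥ ·) (𝓝[<] τb) u :=
    ⟨α, Filter.eventually_map.mpr (hev_Ioo.mono fun t ht => ht.1.le)⟩
  have hinf_ge : α ≤ Filter.liminf u (𝓝[<] τb) :=
    Filter.le_liminf_of_le hbddle.isCoboundedUnder_ge
      (hev_Ioo.mono fun t ht => ht.1.le)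
  have hsup_le : Filter.limsup u (𝓝[<] τb) ≤ β :=
    Filter.limsup_le_of_le hbddge.isCoboundedUnder_le
      (hev_Ioo.mono fun t ht => ht.2.le)
  have hαlt : α < Filter.liminf u (𝓝[<] τb) := lt_of_le_of_ne hinf_ge (Ne.symm hlinf)
  have hltβ : Filter.limsup u (𝓝[<] τb) < β := lt_of_le_of_ne hsup_le hlsup
  obtain ⟨a', ha'def⟩ : ∃ x : ℝ, x = (α + Filter.liminf u (𝓝[<] τb))/2 := ⟨_, rfl⟩
  obtain ⟨b', hb'def⟩ : ∃ x : ℝ, x = (Filter.limsup u (𝓝[<] τb) + β)/2 := ⟨_, rfl⟩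
  have ha'1 : α < a' := by rw [ha'def]; linarith
  have ha'2 : a' < Filter.liminf u (𝓝[<] τb) := by rw [ha'def]; linarith
  have hb'1 : Filter.limsup u (𝓝[<] τb) < b' := by rw [hb'def]; linarith
  have hb'2 : b' < β := by rw [hb'def]; linarith
  have heva : ∀ᶠ t in 𝓝[<] τb, a' < u t := Filter.eventually_lt_of_lt_liminf ha'2 hbddge
  have hevb : ∀ᶠ t in 𝓝[<] τb, u t < b' := Filter.eventually_lt_of_limsup_lt hb'1 hbddle
  have hall : ∀ᶠ t in 𝓝[<] τb, (0 < t ∧ t < τb) ∧ a' < u t ∧ u t < b' :=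
    hev_mem.and (heva.and hevb)
  obtain ⟨t₁, ht₁τ, hIoosub⟩ := mem_nhdsLT_iff_exists_Ioo_subset.mp hall
  obtain ⟨t₂, ht₂def⟩ : ∃ x : ℝ, x = (max t₁ 0 + τb)/2 := ⟨_, rfl⟩
  have hmτ : max t₁ 0 < τb := max_lt ht₁τ hτb0
  have ht₂1 : max t₁ 0 < t₂ := by rw [ht₂def]; linarith
  have ht₂2 : t₂ < τb := by rw [ht₂def]; linarith
  have ht₂0 : 0 ≤ t₂ := le_trans (le_max_right t₁ 0) ht₂1.le
  have htrap1 : ∀ t, t₂ ≤ t → t < τb → a' < u t ∧ u t < b' := by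
    intro t h1 h2
    exact (hIoosub ⟨lt_of_le_of_lt (le_max_left t₁ 0) (lt_of_lt_of_le ht₂1 h1), h2⟩).2
  have hgc : ContinuousOn u (Set.Icc 0 t₂) :=
    hcont.mono (fun s hs => ⟨hs.1, hdom s (lt_of_le_of_lt hs.2 ht₂2)⟩)
  have hIne : (Set.Icc (0:ℝ) t₂).Nonempty := ⟨0, le_refl _, ht₂0⟩
  obtain ⟨zmin, hzminI, hzminle⟩ := isCompact_Icc.exists_isMinOn hIne hgc
  obtain ⟨zmax, hzmaxI, hzmaxle⟩ := isCompact_Icc.exists_isMaxOn hIne hgc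
  rw [isMinOn_iff] at hzminle
  rw [isMaxOn_iff] at hzmaxle
  obtain ⟨A, hAdef⟩ : ∃ x : ℝ, x = min a' (u zmin) := ⟨_, rfl⟩
  obtain ⟨Bv, hBvdef⟩ : ∃ x : ℝ, x = max b' (u zmax) := ⟨_, rfl⟩
  have hzminIoo : u zmin ∈ Set.Ioo α β :=
    hmem zmin hzminI.1 (hdom zmin (lt_of_le_of_lt hzminI.2 ht₂2))
  have hzmaxIoo : u zmax ∈ Set.Ioo α β :=
    hmem zmax hzmaxI.1 (hdom zmax (lt_of_le_of_lt hzmaxI.2 ht₂2))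
  have hAα : α < A := by rw [hAdef]; exact lt_min ha'1 hzminIoo.1
  have hBβ : Bv < β := by rw [hBvdef]; exact max_lt hb'2 hzmaxIoo.2
  have htrapall : ∀ t, 0 ≤ t → t < τb → u t ∈ Set.Icc A Bv := by
    intro t h0 hτ
    by_cases hc2 : t ≤ t₂
    · constructor
      · rw [hAdef]; exact (min_le_right _ _).trans (hzminle t ⟨h0, hc2⟩)
      · rw [hBvdef]; exact (hzmaxle t ⟨h0, hc2⟩).trans (le_max_right _ _)
    · have h3 := htrap1 t (le_of_not_ge hc2) hτ
      constructor
      · rw [hAdef]; exact (min_le_left _ _).trans h3.1.le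
      · rw [hBvdef]; exact h3.2.le.trans (le_max_left _ _)
  have hIccsub : Set.Icc A Bv ⊆ Set.Ioo α β :=
    fun y hy => ⟨lt_of_lt_of_le hAα hy.1, lt_of_le_of_lt hy.2 hBβ⟩
  obtain ⟨Mf, hMf'⟩ := isCompact_Icc.exists_bound_of_continuousOn (hfc.mono hIccsub)
  have hMf : ∀ y ∈ Set.Icc A Bv, |f y| ≤ Mf := by
    intro y hy
    have := hMf' y hy
    rwa [Real.norm_eq_abs] at this
  have hMf0 : 0 ≤ Mf := le_trans (abs_nonneg _) (hMf _ (htrapall 0 (le_refl _) hτb0))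
  -- Hölder continuity of u on [0, τb)
  have hhold : ∀ r r' : ℝ, 0 ≤ r → r ≤ r' → r' < τb →
      |u r' - u r| ≤ |1/Real.Gamma γ| * (2 * Mf * (r'-r)^γ / γ) := by
    intro r r' h0 hrr hr'
    have hsubD : Set.Icc 0 r' ⊆ {t : ℝ | 0 ≤ t ∧ ENNReal.ofReal t < T} :=
      fun s hs => ⟨hs.1, hdom s (lt_of_le_of_lt hs.2 hr')⟩
    have hgc' : ContinuousOn (fun s => f (u s)) (Set.Icc 0 r') :=
      hfc.comp (hcont.mono hsubD) (fun s hs => hmem s hs.1 (hsubD hs).2)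
    have hgM' : ∀ s ∈ Set.Icc 0 r', |f (u s)| ≤ Mf :=
      fun s hs => hMf _ (htrapall s hs.1 (lt_of_le_of_lt hs.2 hr'))
    have hkt := ker_time hγ (a := 0) (t := r) (t' := r') h0 hrr hgc' hgM'
    have hrepr : u r' - u r = (1/Real.Gamma γ)
        * ((∫ s in (0:ℝ)..r', (r'-s)^(γ-1) * f (u s))
          - ∫ s in (0:ℝ)..r, (r-s)^(γ-1) * f (u s)) := by
      rw [heq r' (by linarith) (hdom r' hr'), heq r (by linarith) (hdom r (by linarith))]
      ring
    rw [hrepr, abs_mul]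
    exact mul_le_mul_of_nonneg_left hkt (abs_nonneg _)
  -- Cauchy at τb
  have hcauchy : Cauchy (Filter.map u (𝓝[<] τb)) := by
    rw [Metric.cauchy_iff]
    refine ⟨Filter.map_neBot, ?_⟩
    intro ε' hε'
    obtain ⟨DD, hDDdef⟩ : ∃ x : ℝ, x = |1/Real.Gamma γ| * (2*Mf) := ⟨_, rfl⟩
    have hDD0 : 0 ≤ DD := by rw [hDDdef]; positivity
    obtain ⟨η, hη0, hητ, hηγ⟩ := exists_small_rpow hγ
      (c' := (ε'/2) * γ / (DD+1)) (b := τb/2) (by positivity) (by positivity)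
    refine ⟨u '' (Set.Ioo (max (τb - η) t₂) τb),
      Filter.image_mem_map (Ioo_mem_nhdsLT_of_mem ⟨max_lt (by linarith) ht₂2, le_refl _⟩), ?_⟩
    have key : ∀ p q : ℝ, p ∈ Set.Ioo (max (τb - η) t₂) τb →
        q ∈ Set.Ioo (max (τb - η) t₂) τb → p ≤ q → |u q - u p| < ε' := by
      intro p q hp hq hpq
      have h0p : 0 ≤ p := le_trans ht₂0 (lt_of_le_of_lt (le_max_right _ _) hp.1).le
      have hqp0 : 0 ≤ q - p := by linarith
      have hqpη : q - p < η := by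
        have h1 := lt_of_le_of_lt (le_max_left (τb - η) t₂) hp.1
        have h2 := hq.2
        linarith
      have hstep := hhold p q h0p hpq hq.2
      have hrpow : (q-p)^γ ≤ η^γ := Real.rpow_le_rpow hqp0 hqpη.le hγ0.le
      have hchain : |u q - u p| ≤ DD * η^γ / γ := by
        calc |u q - u p| ≤ |1/Real.Gamma γ| * (2 * Mf * (q-p)^γ / γ) := hstep
          _ = DD * (q-p)^γ / γ := by rw [hDDdef]; ring
          _ ≤ DD * η^γ / γ := by gcongr
      have hfinal : DD * η^γ / γ ≤ ε'/2 := by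
        rw [div_le_iff₀ hγ0]
        calc DD * η^γ ≤ DD * ((ε'/2) * γ / (DD+1)) :=
              mul_le_mul_of_nonneg_left hηγ.le hDD0
          _ ≤ ε'/2 * γ := by
              rw [mul_div_assoc', div_le_iff₀ (by positivity : (0:ℝ) < DD+1)]
              nlinarith [mul_nonneg (mul_nonneg (by linarith : (0:ℝ) ≤ ε'/2) hγ0.le) hDD0]
      linarith
    rintro x ⟨r, hr, rfl⟩ y ⟨r', hr', rfl⟩
    rcases le_total r r' with h | h
    · rw [Real.dist_eq, abs_sub_comm]
      exact key r r' hr hr' h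
    · rw [Real.dist_eq]
      exact key r' r hr' hr h
  obtain ⟨L, hL⟩ := CompleteSpace.complete hcauchy
  have hLt : Filter.Tendsto u (𝓝[<] τb) (𝓝 L) := hL
  have hLmem : L ∈ Set.Icc A Bv :=
    isClosed_Icc.mem_of_tendsto hLt (hev_mem.mono fun t ht => htrapall t ht.1.le ht.2)
  -- extend u continuously to [0, τb]
  obtain ⟨uex, huexdef⟩ : ∃ v : ℝ → ℝ, v = fun t => if t < τb then u t else L := ⟨_, rfl⟩
  have huexlt : ∀ t, t < τb → uex t = u t := by
    intro t h
    rw [huexdef]; exact if_pos h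
  have huexτb : uex τb = L := by rw [huexdef]; exact if_neg (lt_irrefl _)
  have hIoo0τb : Set.Ioo (0:ℝ) τb ∈ 𝓝[<] τb := Ioo_mem_nhdsLT_of_mem ⟨hτb0, le_refl _⟩
  have hucont : ContinuousOn uex (Set.Icc 0 τb) := by
    intro x hx
    rcases lt_or_eq_of_le hx.2 with hxlt | hxeq
    · have hIco_mem : Set.Ico 0 τb ∈ 𝓝[Set.Icc 0 τb] x := by
        apply Filter.mem_of_superset
          (Filter.inter_mem self_mem_nhdsWithin
            (mem_nhdsWithin_of_mem_nhds (isOpen_Iio.mem_nhds hxlt)))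
        exact fun s hs => ⟨hs.1.1, hs.2⟩
      have hg_cwa : ContinuousWithinAt u (Set.Icc 0 τb) x := by
        apply (hcont x ⟨hx.1, hdom x hxlt⟩).mono_of_mem_nhdsWithin
        apply Filter.mem_of_superset hIco_mem
        exact fun s hs => ⟨hs.1, hdom s hs.2⟩
      apply hg_cwa.congr_of_eventuallyEq
      · exact Filter.eventuallyEq_of_mem hIco_mem (fun s hs => huexlt s hs.2)
      · exact huexlt x hxlt
    · have hxx : x = τb := hxeq
      subst hxx
      have hsplit : Set.Icc (0:ℝ) x = Set.Ico 0 x ∪ {x} := by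
        ext y
        simp only [Set.mem_Icc, Set.mem_union, Set.mem_Ico, Set.mem_singleton_iff]
        constructor
        · rintro ⟨h1, h2⟩
          rcases lt_or_eq_of_le h2 with h | h
          · exact Or.inl ⟨h1, h⟩
          · exact Or.inr h
        · rintro (⟨h1, h2⟩ | h)
          · exact ⟨h1, h2.le⟩
          · exact ⟨by rw [h]; exact hx.1, by rw [h]⟩
      have h1 : Filter.Tendsto uex (𝓝[Set.Ico 0 x] x) (𝓝 L) := by
        have hle1 : 𝓝[Set.Ico 0 x] x ≤ 𝓝[<] x :=
          nhdsWithin_mono x (fun s hs => hs.2)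
        have h2 : Filter.Tendsto u (𝓝[Set.Ico 0 x] x) (𝓝 L) := hLt.mono_left hle1
        apply h2.congr'
        exact Filter.eventuallyEq_of_mem self_mem_nhdsWithin
          (fun s hs => (huexlt s hs.2).symm)
      have h2 : Filter.Tendsto uex (𝓝[{x}] x) (𝓝 L) := by
        rw [nhdsWithin_singleton]
        have := tendsto_pure_nhds uex x
        rwa [huexτb] at this
      show Filter.Tendsto uex (𝓝[Set.Icc 0 x] x) (𝓝 (uex x))
      rw [huexτb, hsplit, nhdsWithin_union]
      exact Filter.tendsto_sup.mpr ⟨h1, h2⟩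
  have humem : ∀ t ∈ Set.Icc 0 τb, uex t ∈ Set.Ioo α β := by
    intro t ht
    rcases lt_or_eq_of_le ht.2 with h | h
    · rw [huexlt t h]; exact hmem t ht.1 (hdom t h)
    · rw [h, huexτb]; exact hIccsub hLmem
  have huextrap : ∀ t ∈ Set.Icc 0 τb, uex t ∈ Set.Icc A Bv := by
    intro t ht
    rcases lt_or_eq_of_le ht.2 with h | h
    · rw [huexlt t h]; exact htrapall t ht.1 h
    · rw [h, huexτb]; exact hLmem
  have hg2 : ContinuousOn (fun s => f (uex s)) (Set.Icc 0 τb) :=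
    hfc.comp hucont humem
  have hg2M : ∀ s ∈ Set.Icc 0 τb, |f (uex s)| ≤ Mf := fun s hs => hMf _ (huextrap s hs)
  obtain ⟨RHS, hRHSdef⟩ : ∃ R : ℝ → ℝ,
      R = fun r => u₀ + (1/Real.Gamma γ) * ∫ s in (0:ℝ)..r, (r-s)^(γ-1) * f (uex s) := ⟨_, rfl⟩
  have hRHS_eq : ∀ r, 0 ≤ r → r < τb → u r = RHS r := by
    intro r h0 hr
    rw [hRHSdef]
    show u r = u₀ + (1/Real.Gamma γ) * ∫ s in (0:ℝ)..r, (r-s)^(γ-1) * f (uex s)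
    rw [heq r h0 (hdom r hr)]
    have : (∫ s in (0:ℝ)..r, (r-s)^(γ-1) * f (uex s))
        = ∫ s in (0:ℝ)..r, (r-s)^(γ-1) * f (u s) := by
      apply intervalIntegral.integral_congr
      intro s hs
      rw [Set.uIcc_of_le h0] at hs
      show (r-s)^(γ-1) * f (uex s) = (r-s)^(γ-1) * f (u s)
      rw [huexlt s (lt_of_le_of_lt hs.2 hr)]
    rw [this]
  have hRHS_holder : ∀ x ∈ Set.Icc (0:ℝ) τb, ∀ y ∈ Set.Icc (0:ℝ) τb, x ≤ y →
      |RHS y - RHS x| ≤ (|1/Real.Gamma γ| * (2*Mf) / γ) * (y-x)^γ := by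
    intro x hx y hy hxy
    have hkt := ker_time hγ (a := 0) (t := x) (t' := y) hx.1 hxy
      (hg2.mono (Set.Icc_subset_Icc_right hy.2))
      (fun s hs => hg2M s ⟨hs.1, hs.2.trans hy.2⟩)
    have hrepr : RHS y - RHS x = (1/Real.Gamma γ)
        * ((∫ s in (0:ℝ)..y, (y-s)^(γ-1) * f (uex s))
          - ∫ s in (0:ℝ)..x, (x-s)^(γ-1) * f (uex s)) := by
      rw [hRHSdef]; ring
    rw [hrepr, abs_mul]
    calc |1/Real.Gamma γ| * |_| ≤ |1/Real.Gamma γ| * (2 * Mf * (y-x)^γ / γ) :=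
          mul_le_mul_of_nonneg_left hkt (abs_nonneg _)
      _ = (|1/Real.Gamma γ| * (2*Mf) / γ) * (y-x)^γ := by ring
  have hRHScont : ContinuousOn RHS (Set.Icc 0 τb) := contOn_of_holder hγ hRHS_holder
  have htendRHS : Filter.Tendsto RHS (𝓝[<] τb) (𝓝 (RHS τb)) := by
    have h1 : ContinuousWithinAt RHS (Set.Icc 0 τb) τb := hRHScont τb ⟨hτb0.le, le_refl _⟩
    have hle1 : 𝓝[<] τb ≤ 𝓝[Set.Icc 0 τb] τb := by
      apply le_trans (nhdsWithin_le_of_mem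
        (Filter.mem_of_superset hIoo0τb (fun s hs => (⟨hs.1.le, hs.2.le⟩ : s ∈ Set.Icc 0 τb))))
      exact le_refl _
    exact h1.tendsto.mono_left hle1
  have hL_RHS : Filter.Tendsto u (𝓝[<] τb) (𝓝 (RHS τb)) := by
    apply htendRHS.congr'
    exact Filter.eventuallyEq_of_mem hIoo0τb
      (fun r hr => (hRHS_eq r hr.1.le hr.2).symm)
  have hLeq : L = RHS τb := tendsto_nhds_unique hLt hL_RHS
  have hueq : ∀ t ∈ Set.Icc 0 τb,
      uex t = u₀ + (1/Real.Gamma γ) * ∫ s in (0:ℝ)..t, (t-s)^(γ-1) * f (uex s) := by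
    intro t ht
    rcases lt_or_eq_of_le ht.2 with h | h
    · rw [huexlt t h, hRHS_eq t ht.1 h, hRHSdef]
    · rw [h, huexτb, hLeq, hRHSdef]
  -- extend the solution beyond τb, contradiction with maximality
  obtain ⟨ε, hε0, v, _, hvcont, hvmem, hveq⟩ := ext_sol hγ hf hτb0.le hucont humem hueq
  have hsol2 : IsSolUpTo γ f (Set.Ioo α β) u₀ v (ENNReal.ofReal (τb + ε)) :=
    isSol_of_closed hγ (by linarith) hvcont hvmem hveq
  have hmemS : ENNReal.ofReal (τb+ε) ≤ maxTime γ f (Set.Ioo α β) u₀ := by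
    rw [maxTime_def]
    exact le_sSup ⟨v, hsol2⟩
  rw [← hT] at hmemS
  have hlt2 : T < ENNReal.ofReal (τb + ε) := by
    rw [← hof]
    exact (ENNReal.ofReal_lt_ofReal_iff (by linarith)).mpr (by linarith)
  exact absurd hmemS (not_le.mpr hlt2)

end Dich


/-- existence, uniqueness, and the dichotomy at the maximal time. -/
theorem stmt0 (γ α β u₀ : ℝ) (f : ℝ → ℝ)
    (hγ : γ ∈ Set.Ioo (0:ℝ) 1) (hαβ : α < β)
    (hf : ∀ x ∈ Set.Ioo α β, ∃ K : NNReal, ∃ s ∈ 𝓝[Set.Ioo α β] x, LipschitzOnWith K f s)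
    (hu₀ : u₀ ∈ Set.Ioo α β) :
    (∃ T : ℝ≥0∞, 0 < T ∧ ∃ u : ℝ → ℝ, IsSolUpTo γ f (Set.Ioo α β) u₀ u T) ∧
    (∀ (T₁ T₂ : ℝ≥0∞) (u₁ u₂ : ℝ → ℝ),
      IsSolUpTo γ f (Set.Ioo α β) u₀ u₁ T₁ → IsSolUpTo γ f (Set.Ioo α β) u₀ u₂ T₂ →
      ∀ t : ℝ, 0 ≤ t → ENNReal.ofReal t < min T₁ T₂ → u₁ t = u₂ t) ∧
    (∃ u : ℝ → ℝ, IsSolUpTo γ f (Set.Ioo α β) u₀ u (maxTime γ f (Set.Ioo α β) u₀) ∧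
      (maxTime γ f (Set.Ioo α β) u₀ = ⊤ ∨
        (maxTime γ f (Set.Ioo α β) u₀ < ⊤ ∧
          (Filter.liminf u (𝓝[<] (maxTime γ f (Set.Ioo α β) u₀).toReal) = α ∨
           Filter.limsup u (𝓝[<] (maxTime γ f (Set.Ioo α β) u₀).toReal) = β)))) := by
  refine ⟨exists_local hγ hf hu₀, ?_, ?_⟩
  · intro T₁ T₂ u₁ u₂ h₁ h₂ t ht hmin
    exact sol_unique hγ hf h₁ h₂ ht (lt_of_lt_of_le hmin (min_le_left _ _))
      (lt_of_lt_of_le hmin (min_le_right _ _))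
  · obtain ⟨u, hmax, _⟩ := sol_max (u₀ := u₀) hγ hf
    refine ⟨u, hmax, ?_⟩
    by_cases htop : maxTime γ f (Set.Ioo α β) u₀ = ⊤
    · exact Or.inl htop
    · refine Or.inr ⟨lt_top_iff_ne_top.mpr htop, ?_⟩
      have hpos : 0 < maxTime γ f (Set.Ioo α β) u₀ := by
        obtain ⟨T₀, hT₀pos, w₀, hw₀⟩ := exists_local hγ hf hu₀
        calc (0:ℝ≥0∞) < T₀ := hT₀pos
          _ ≤ maxTime γ f (Set.Ioo α β) u₀ := by
              rw [maxTime_def]; exact le_sSup ⟨w₀, hw₀⟩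
      exact dichotomy hγ hf rfl hpos htop hmax
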